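/- The sparing number of the Grötzsch graph is 5. -/

import Mathlib

open Pointwise

/-- The induced set-label on unordered pairs: the sumset of the two vertex labels. -/
def edgeLabel {V : Type*} (f : V → Finset ℕ) : Sym2 V → Finset ℕ :=
  Sym2.lift ⟨fun u v => f u + f v, fun u v => add_comm (f u) (f v)⟩

/-- `f` is a weak integer additive set-indexer of `G`. -/
structure IsWeakIASI {V : Type*} (G : SimpleGraph V) (f : V → Finset ℕ) : Prop where
  nonempty : ∀ v, (f v).Nonempty
  injective : Function.Injective f
  edgeInjective : Set.InjOn (edgeLabel f) G.edgeSet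
  weak : ∀ u v, G.Adj u v → (edgeLabel f s(u, v)).card = max (f u).card (f v).card

/-- The number of mono-indexed edges of `G` under the labeling `f`. -/
noncomputable def monoEdgeCount {V : Type*} (G : SimpleGraph V) (f : V → Finset ℕ) : ℕ :=
  {e ∈ G.edgeSet | (edgeLabel f e).card = 1}.ncard

/-- The sparing number: the minimum number of mono-indexed edges over all weak IASIs. -/
noncomputable def sparingNumber {V : Type*} (G : SimpleGraph V) : ℕ :=
  sInf {n | ∃ f, IsWeakIASI G f ∧ monoEdgeCount G f = n}

/-- The Grötzsch graph, the Mycielskian of the 5-cycle: vertices `vᵢ` (`Sum.inl i`)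
forming a 5-cycle, vertices `wᵢ` (`Sum.inr (Sum.inl i)`) with `wᵢ` adjacent to the two
neighbours `vᵢ₊₁, vᵢ₋₁` of `vᵢ`, and a central vertex `z` (`Sum.inr (Sum.inr ())`)
adjacent to all the `wᵢ`. -/
def grotzschGraph : SimpleGraph (Fin 5 ⊕ Fin 5 ⊕ Unit) :=
  SimpleGraph.fromRel (fun a b =>
    match a, b with
    | Sum.inl i, Sum.inl j => j = i + 1
    | Sum.inl i, Sum.inr (Sum.inl j) => i = j + 1 ∨ i = j - 1
    | Sum.inr (Sum.inl _), Sum.inr (Sum.inr _) => True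
    | _, _ => False)

/-! ### Auxiliary definitions -/

abbrev VG := Fin 5 ⊕ Fin 5 ⊕ Unit

def vv (i : Fin 5) : VG := Sum.inl i
def ww (i : Fin 5) : VG := Sum.inr (Sum.inl i)
def zz : VG := Sum.inr (Sum.inr ())

/-- The base relation of the Grötzsch graph, with a decidability instance. -/
def grel : VG → VG → Prop := fun a b =>
  match a, b with
  | Sum.inl i, Sum.inl j => j = i + 1
  | Sum.inl i, Sum.inr (Sum.inl j) => i = j + 1 ∨ i = j - 1
  | Sum.inr (Sum.inl _), Sum.inr (Sum.inr _) => True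
  | _, _ => False

instance grelDec : DecidableRel grel := fun a b => by
  rcases a with i | j | u <;> rcases b with i' | j' | u' <;>
    first
    | exact (inferInstance : Decidable (i' = i + 1))
    | exact (inferInstance : Decidable (i = j' + 1 ∨ i = j' - 1))
    | exact (inferInstance : Decidable True)
    | exact (inferInstance : Decidable False)

instance gAdjDec : DecidableRel grotzschGraph.Adj := fun a b =>
  inferInstanceAs (Decidable (a ≠ b ∧ (grel a b ∨ grel b a)))

/-- The 20 edges of the Grötzsch graph, as ordered pairs. -/
def edgeList : List (VG × VG) :=
  [(vv 0, vv 1), (vv 1, vv 2), (vv 2, vv 3), (vv 3, vv 4), (vv 4, vv 0),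
   (vv 1, ww 0), (vv 4, ww 0), (vv 2, ww 1), (vv 0, ww 1), (vv 3, ww 2),
   (vv 1, ww 2), (vv 4, ww 3), (vv 2, ww 3), (vv 0, ww 4), (vv 3, ww 4),
   (ww 0, zz), (ww 1, zz), (ww 2, zz), (ww 3, zz), (ww 4, zz)]

lemma adjList : ∀ p ∈ edgeList, grotzschGraph.Adj p.1 p.2 := by
  intro p hp; fin_cases hp <;> decide

lemma nodupImg : (edgeList.map (fun p : VG × VG => s(p.1, p.2))).Nodup := by decide

lemma edgeLabel_mk {V : Type*} (f : V → Finset ℕ) (a b : V) :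
    edgeLabel f s(a, b) = f a + f b := rfl

/-- For a weak IASI, every edge has a singleton endpoint. -/
lemma singleton_endpoint (A B : Finset ℕ) (hA : A.Nonempty) (hB : B.Nonempty)
    (h : (A + B).card = max A.card B.card) : A.card = 1 ∨ B.card = 1 := by
  by_contra hc
  push_neg at hc
  have h1 : 1 ≤ A.card := hA.card_pos
  have h2 : 1 ≤ B.card := hB.card_pos
  have h3 := cauchy_davenport_add_of_linearOrder_isCancelAdd hA hB
  rcases max_cases A.card B.card with ⟨he, _⟩ | ⟨he, _⟩ <;> omega

set_option maxRecDepth 40000 in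
/-- The combinatorial heart of the lower bound: if a boolean labeling of the vertices of
the Grötzsch graph is such that every edge has a `true` endpoint, then at least 5 edges
have both endpoints `true`. -/
lemma key : ∀ a0 a1 a2 a3 a4 b0 b1 b2 b3 b4 c : Bool,
    ((a0||a1) && (a1||a2) && (a2||a3) && (a3||a4) && (a4||a0) &&
     (a1||b0) && (a4||b0) && (a2||b1) && (a0||b1) && (a3||b2) &&
     (a1||b2) && (a4||b3) && (a2||b3) && (a0||b4) && (a3||b4) &&
     (b0||c) && (b1||c) && (b2||c) && (b3||c) && (b4||c)) = true →
    5 ≤ List.countP (fun x => x) [a0&&a1, a1&&a2, a2&&a3, a3&&a4, a4&&a0,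
          a1&&b0, a4&&b0, a2&&b1, a0&&b1, a3&&b2,
          a1&&b2, a4&&b3, a2&&b3, a0&&b4, a3&&b4,
          b0&&c, b1&&c, b2&&c, b3&&c, b4&&c] := by decide

lemma key' (s : VG → Bool) (h : ∀ p ∈ edgeList, (s p.1 || s p.2) = true) :
    5 ≤ (edgeList.filter fun p => s p.1 && s p.2).length := by
  rw [← List.countP_eq_length_filter]
  have heq : List.countP (fun p : VG × VG => s p.1 && s p.2) edgeList
      = List.countP (fun x => x) (edgeList.map fun p => s p.1 && s p.2) := by
    rw [List.countP_map]; rfl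
  rw [heq]
  simp only [edgeList, List.mem_cons, List.not_mem_nil, or_false, forall_eq_or_imp,
    forall_eq] at h
  obtain ⟨h1,h2,h3,h4,h5,h6,h7,h8,h9,h10,h11,h12,h13,h14,h15,h16,h17,h18,h19,h20⟩ := h
  exact key _ _ _ _ _ _ _ _ _ _ _ (by simp_all)

/-- Lower bound: every weak IASI of the Grötzsch graph has at least 5 mono-indexed edges. -/
lemma lower (f : VG → Finset ℕ) (hf : IsWeakIASI grotzschGraph f) :
    5 ≤ monoEdgeCount grotzschGraph f := by
  classical
  set s : VG → Bool := fun v => decide ((f v).card = 1) with hs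
  have hcov : ∀ p ∈ edgeList, (s p.1 || s p.2) = true := by
    intro p hp
    have hadj := adjList p hp
    have hw := hf.weak p.1 p.2 hadj
    rw [edgeLabel_mk] at hw
    rcases singleton_endpoint _ _ (hf.nonempty _) (hf.nonempty _) hw with h | h <;>
      simp [hs, h]
  have hlen := key' s hcov
  set l := edgeList.filter (fun p => s p.1 && s p.2) with hl
  have hsub : ↑(l.map (fun p : VG × VG => s(p.1, p.2))).toFinset
      ⊆ {e ∈ grotzschGraph.edgeSet | (edgeLabel f e).card = 1} := by
    intro e he
    rw [Finset.mem_coe, List.mem_toFinset, List.mem_map] at he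
    obtain ⟨p, hp, rfl⟩ := he
    rw [hl, List.mem_filter] at hp
    obtain ⟨hp1, hp2⟩ := hp
    refine ⟨adjList p hp1, ?_⟩
    rw [edgeLabel_mk]
    simp only [hs, Bool.and_eq_true, decide_eq_true_eq] at hp2
    obtain ⟨a, ha⟩ := Finset.card_eq_one.mp hp2.1
    obtain ⟨b, hb⟩ := Finset.card_eq_one.mp hp2.2
    rw [ha, hb, Finset.singleton_add_singleton]
    exact Finset.card_singleton _
  have hsl : l.Sublist edgeList := hl ▸ edgeList.filter_sublist
  have hnodup : (l.map (fun p : VG × VG => s(p.1, p.2))).Nodup := nodupImg.sublist (hsl.map _)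
  calc (5 : ℕ) ≤ l.length := hlen
    _ = (l.map (fun p : VG × VG => s(p.1, p.2))).toFinset.card := by
        rw [List.toFinset_card_of_nodup hnodup, List.length_map]
    _ = (↑(l.map (fun p : VG × VG => s(p.1, p.2))).toFinset : Set (Sym2 VG)).ncard := (Set.ncard_coe_finset _).symm
    _ ≤ _ := Set.ncard_le_ncard hsub (Set.toFinite _)

/-! ### The optimal labeling -/

/-- An optimal weak IASI of the Grötzsch graph. -/
def f0 : VG → Finset ℕ
  | Sum.inl i => {2 ^ (i : ℕ)}
  | Sum.inr (Sum.inl i) => {200 * (i : ℕ) + 200, 200 * (i : ℕ) + 231 + (i : ℕ)}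
  | Sum.inr (Sum.inr _) => {100}

set_option synthInstance.maxSize 2000
set_option maxHeartbeats 2000000
set_option maxRecDepth 1000000

lemma f0_nonempty : ∀ v, (f0 v).Nonempty := by decide

lemma f0_inj : Function.Injective f0 := by decide

lemma f0_weak : ∀ u v : VG, grotzschGraph.Adj u v →
    (f0 u + f0 v).card = max (f0 u).card (f0 v).card := by decide

lemma f0_einj : ∀ a b c d : VG, grotzschGraph.Adj a b → grotzschGraph.Adj c d →
    f0 a + f0 b = f0 c + f0 d → (a = c ∧ b = d) ∨ (a = d ∧ b = c) := by decide

/-- The five mono-indexed edges of the optimal labeling: the 5-cycle. -/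
def cycEdges : Finset (Sym2 VG) :=
  {s(vv 0, vv 1), s(vv 1, vv 2), s(vv 2, vv 3), s(vv 3, vv 4), s(vv 4, vv 0)}

lemma f0_mono : ∀ a b : VG,
    (grotzschGraph.Adj a b ∧ (f0 a + f0 b).card = 1) ↔ s(a, b) ∈ cycEdges := by decide

lemma cycCard : cycEdges.card = 5 := by decide

lemma f0_isWeak : IsWeakIASI grotzschGraph f0 where
  nonempty := f0_nonempty
  injective := f0_inj
  edgeInjective := by
    intro e he e' he' heq
    induction e using Sym2.ind with | _ a b =>
    induction e' using Sym2.ind with | _ c d =>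
    rw [SimpleGraph.mem_edgeSet] at he he'
    rw [edgeLabel_mk, edgeLabel_mk] at heq
    rcases f0_einj a b c d he he' heq with ⟨h1, h2⟩ | ⟨h1, h2⟩
    · rw [h1, h2]
    · rw [h1, h2, Sym2.eq_swap]
  weak := by
    intro u v h
    rw [edgeLabel_mk]
    exact f0_weak u v h

lemma f0_count : monoEdgeCount grotzschGraph f0 = 5 := by
  have hset : {e ∈ grotzschGraph.edgeSet | (edgeLabel f0 e).card = 1} = ↑cycEdges := by
    ext e
    induction e using Sym2.ind with | _ a b =>
    rw [Set.mem_sep_iff, SimpleGraph.mem_edgeSet, edgeLabel_mk, Finset.mem_coe]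
    exact f0_mono a b
  rw [monoEdgeCount, hset, Set.ncard_coe_finset, cycCard]

/-- The sparing number of the Grötzsch graph is `5`. -/
theorem sparingNumber_grotzsch : sparingNumber grotzschGraph = 5 := by
  have h5 : (5 : ℕ) ∈ {n | ∃ f, IsWeakIASI grotzschGraph f ∧ monoEdgeCount grotzschGraph f = n} :=
    ⟨f0, f0_isWeak, f0_count⟩
  refine le_antisymm (Nat.sInf_le h5) (le_csInf ⟨5, h5⟩ ?_)
  rintro n ⟨f, hf, rfl⟩
  exact lower f hf
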